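/- Euler's identity: Σ_{n≥0} (-z)^n · q^{n(n-1)/2} / ((1-q)(1-q²)···(1-q^n)) = ∏_{k≥0} (1 - z q^k), as an identity of formal power series in q and z. -/

import Mathlib

open PowerSeries Finset

/-- The variable `q`, as a formal power series over `ℚ`. -/
noncomputable abbrev qvar : PowerSeries ℚ := PowerSeries.X

/-- The left-hand side of Euler's identity, a formal power series in `z` (the outer
variable) with coefficients formal power series in `q`: the coefficient of `z^n` is
`(-1)^n q^{n(n-1)/2} / (q;q)_n`, where `(q;q)_n = ∏_{j=1}^n (1-q^j)` (its inverse is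
taken via `Ring.inverse`, which is the genuine inverse since `(q;q)_n` is a unit). -/
noncomputable def eulerLHS : PowerSeries (PowerSeries ℚ) :=
  PowerSeries.mk fun n =>
    (-1 : PowerSeries ℚ) ^ n * qvar ^ (n * (n - 1) / 2) *
      Ring.inverse (∏ j ∈ Finset.Icc 1 n, (1 - qvar ^ j))

/-- The truncation `∏_{k=0}^{N-1} (1 - z q^k)` of the infinite product `(z;q)_∞`. -/
noncomputable def eulerRHS (N : ℕ) : PowerSeries (PowerSeries ℚ) :=
  ∏ k ∈ Finset.range N, (1 - PowerSeries.C (qvar ^ k) * PowerSeries.X)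

/-- shorthand for the coefficient of `z^n` in `eulerLHS`. -/
noncomputable def aCoef (n : ℕ) : PowerSeries ℚ :=
  (-1 : PowerSeries ℚ) ^ n * qvar ^ (n * (n - 1) / 2) *
    Ring.inverse (∏ j ∈ Finset.Icc 1 n, (1 - qvar ^ j))

lemma coeff_eulerLHS (n : ℕ) :
    PowerSeries.coeff n eulerLHS = aCoef n :=
  PowerSeries.coeff_mk _ _

lemma tri_succ (k : ℕ) : (k + 1) * ((k + 1) - 1) / 2 = k * (k - 1) / 2 + k := by
  rw [← Finset.sum_range_id (k + 1), ← Finset.sum_range_id k, Finset.sum_range_succ]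

lemma poch_isUnit (n : ℕ) : IsUnit (∏ j ∈ Finset.Icc 1 n, (1 - qvar ^ j)) := by
  refine isUnit_of_mul_isUnit_left (y := 1) ?_
  rw [mul_one]
  induction n with
  | zero => simp
  | succ k ih =>
      rw [Finset.prod_Icc_succ_top (Nat.succ_le_succ (Nat.zero_le k))]
      refine ih.mul ?_
      rw [PowerSeries.isUnit_iff_constantCoeff]
      simp [zero_pow (Nat.succ_ne_zero k)]

lemma one_sub_isUnit (k : ℕ) : IsUnit (1 - qvar ^ (k + 1)) := by
  rw [PowerSeries.isUnit_iff_constantCoeff]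
  simp [zero_pow (Nat.succ_ne_zero k)]

lemma aCoef_rec (k : ℕ) :
    aCoef (k + 1) = qvar ^ (k + 1) * aCoef (k + 1) - qvar ^ k * aCoef k := by
  have hc : (1 - qvar ^ (k + 1)) * Ring.inverse (1 - qvar ^ (k + 1)) = 1 :=
    Ring.mul_inverse_cancel _ (one_sub_isUnit k)
  have key : (1 - qvar ^ (k + 1)) * aCoef (k + 1) = -(qvar ^ k * aCoef k) := by
    have hprod : ∏ j ∈ Finset.Icc 1 (k + 1), (1 - qvar ^ j)
        = (∏ j ∈ Finset.Icc 1 k, (1 - qvar ^ j)) * (1 - qvar ^ (k + 1)) :=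
      Finset.prod_Icc_succ_top (Nat.succ_le_succ (Nat.zero_le k)) _
    unfold aCoef
    rw [hprod, Ring.mul_inverse_rev, tri_succ k]
    linear_combination ((-1 : PowerSeries ℚ) ^ (k + 1) * qvar ^ (k * (k - 1) / 2 + k) *
      Ring.inverse (∏ j ∈ Finset.Icc 1 k, (1 - qvar ^ j))) * hc
  linear_combination key

lemma eulerRHS_rec (N : ℕ) :
    eulerRHS (N + 1) = (1 - PowerSeries.X) * PowerSeries.rescale qvar (eulerRHS N) := by
  unfold eulerRHS
  rw [Finset.prod_range_succ', map_prod]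
  have : ∀ k : ℕ, PowerSeries.rescale qvar
      (1 - PowerSeries.C (qvar ^ k) * PowerSeries.X)
      = 1 - PowerSeries.C (qvar ^ (k + 1)) * PowerSeries.X := by
    intro k
    ext n
    simp only [PowerSeries.coeff_rescale, map_sub, PowerSeries.coeff_one,
      PowerSeries.coeff_C_mul, PowerSeries.coeff_X]
    rcases n with _ | _ | n <;> simp [pow_succ, mul_comm]
  simp_rw [this]
  rw [mul_comm]
  congr 1
  simp [pow_zero]

lemma coeff_zero_eulerRHS (N : ℕ) :
    PowerSeries.coeff 0 (eulerRHS N) = 1 := by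
  rw [PowerSeries.coeff_zero_eq_constantCoeff]
  unfold eulerRHS
  rw [map_prod]
  simp

lemma eulerRHS_coeff_rec (N k : ℕ) :
    PowerSeries.coeff (k + 1) (eulerRHS (N + 1)) =
      qvar ^ (k + 1) * PowerSeries.coeff (k + 1) (eulerRHS N) -
        qvar ^ k * PowerSeries.coeff k (eulerRHS N) := by
  rw [eulerRHS_rec, sub_mul, one_mul, map_sub, PowerSeries.coeff_succ_X_mul,
    PowerSeries.coeff_rescale, PowerSeries.coeff_rescale]

lemma aCoef_zero : aCoef 0 = 1 := by
  simp [aCoef]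

lemma main_lemma : ∀ N n m : ℕ, m + n ≤ N + n * (n - 1) / 2 →
    PowerSeries.coeff m (PowerSeries.coeff n (eulerRHS N)) =
      PowerSeries.coeff m (aCoef n) := by
  intro N
  induction N with
  | zero =>
      intro n m h
      match n with
      | 0 =>
          simp only [Nat.zero_add, Nat.add_zero] at h ⊢
          rw [coeff_zero_eulerRHS, aCoef_zero]
      | k + 1 =>
          have h1 : PowerSeries.coeff (k + 1) (eulerRHS 0) = 0 := by
            unfold eulerRHS
            simp [PowerSeries.coeff_one]
          rw [h1]
          have h2 : aCoef (k + 1) = PowerSeries.X ^ ((k + 1) * ((k + 1) - 1) / 2) *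
              ((-1 : PowerSeries ℚ) ^ (k + 1) *
                Ring.inverse (∏ j ∈ Finset.Icc 1 (k + 1), (1 - qvar ^ j))) := by
            unfold aCoef; ring
          rw [h2, PowerSeries.coeff_X_pow_mul', if_neg (by omega), map_zero]
  | succ N ih =>
      intro n m h
      match n with
      | 0 =>
          rw [coeff_zero_eulerRHS, aCoef_zero]
      | k + 1 =>
          have he := tri_succ k
          rw [eulerRHS_coeff_rec, aCoef_rec, map_sub, map_sub,
            PowerSeries.coeff_X_pow_mul', PowerSeries.coeff_X_pow_mul',
            PowerSeries.coeff_X_pow_mul', PowerSeries.coeff_X_pow_mul']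
          congr 1
          · split_ifs with h1
            · exact ih (k + 1) (m - (k + 1)) (by omega)
            · rfl
          · split_ifs with h1
            · exact ih k (m - k) (by omega)
            · rfl

theorem euler_q_identity :
    ∀ n m N : ℕ, m < N →
      PowerSeries.coeff m (PowerSeries.coeff n (eulerRHS N)) =
        PowerSeries.coeff m (PowerSeries.coeff n eulerLHS) := by
  intro n m N hmN
  rw [coeff_eulerLHS]
  apply main_lemma
  match n with
  | 0 => omega
  | 1 => omega
  | k + 2 =>
      have h2 : (k + 2) * ((k + 2) - 1) / 2 = (k + 1) * ((k + 1) - 1) / 2 + (k + 1) :=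
        tri_succ (k + 1)
      omega
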